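/- Let N ≥ 2 be an integer, a ∈ ℝ, b = (a, 0) ∈ ℝ², and γ ∈ ℝ. Let φ, φ̂ : ℝ² → ℝ be twice continuously differentiable functions that are even in the second variable (φ(ξ₁, −ξ₂) = φ(ξ₁, ξ₂) and likewise for φ̂), and assume that the function ξ ↦ ∂₂(Q̃_b φ + γ T_b φ̂)(ξ) · Δφ(ξ) is integrable on ℝ². Then ∫_{ℝ²} ∂₂(Q̃_b φ + γ T_b φ̂)(ξ) · Δφ(ξ) dξ = 0. (This is the vanishing of the real part of the velocity functional B_ε evaluated at streamfunctions that are even in ξ₂, which forces the radius of the vortex polygon to be stationary at the Eulerian level.) -/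

import Mathlib

open Real MeasureTheory Finset

/-- The polygon–polygon operator `(Q̃_b f)(ξ) = ∑_{l=1}^{N-1} f(Q_l ξ + (Q_l - I) b)`,
where the plane is identified with `ℂ` and the rotation `Q_l` by angle `2πl/N` is
multiplication by `exp(2πi/N)^l`. -/
noncomputable def Qop (N : ℕ) (b : ℂ) (f : ℂ → ℝ) (ξ : ℂ) : ℝ :=
  ∑ l ∈ Finset.Ico 1 N,
    f ((Complex.exp (2 * π * Complex.I / N)) ^ l * ξ +
        ((Complex.exp (2 * π * Complex.I / N)) ^ l - 1) * b)

/-- Partial derivative in the second variable (direction `I`). -/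
noncomputable def d2 (g : ℂ → ℝ) (x : ℂ) : ℝ := fderiv ℝ g x Complex.I

/-- Laplacian `Δg = ∂₁₁g + ∂₂₂g` on the plane identified with `ℂ`. -/
noncomputable def lap (g : ℂ → ℝ) (x : ℂ) : ℝ :=
  fderiv ℝ (fun y => fderiv ℝ g y 1) x 1 +
    fderiv ℝ (fun y => fderiv ℝ g y Complex.I) x Complex.I

/-- chain rule through conjugation -/
lemma fderiv_conj_comp (f : ℂ → ℝ) (hf : Differentiable ℝ f) (x v : ℂ) :
    fderiv ℝ (fun ξ => f ((starRingEnd ℂ) ξ)) x v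
      = fderiv ℝ f ((starRingEnd ℂ) x) ((starRingEnd ℂ) v) := by
  have h : (fun ξ => f ((starRingEnd ℂ) ξ)) = f ∘ ⇑Complex.conjCLE := rfl
  rw [h, fderiv_comp x (hf _) Complex.conjCLE.differentiableAt,
    Complex.conjCLE.fderiv]
  rfl

/-- for conj-even differentiable functions -/
lemma fderiv_even (f : ℂ → ℝ) (hf : Differentiable ℝ f)
    (he : ∀ ξ : ℂ, f ((starRingEnd ℂ) ξ) = f ξ) (x v : ℂ) :
    fderiv ℝ f x v = fderiv ℝ f ((starRingEnd ℂ) x) ((starRingEnd ℂ) v) := by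
  conv_lhs => rw [show f = (fun ξ => f ((starRingEnd ℂ) ξ)) from (funext he).symm]
  exact fderiv_conj_comp f hf x v

lemma fderiv_odd (f : ℂ → ℝ) (hf : Differentiable ℝ f)
    (he : ∀ ξ : ℂ, f ((starRingEnd ℂ) ξ) = - f ξ) (x v : ℂ) :
    fderiv ℝ f x v = - fderiv ℝ f ((starRingEnd ℂ) x) ((starRingEnd ℂ) v) := by
  have h1 : (fun ξ => f ((starRingEnd ℂ) ξ)) = fun ξ => - f ξ := funext he
  have h2 := fderiv_conj_comp f hf x v
  rw [h1] at h2
  rw [← h2, fderiv_fun_neg]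
  simp

lemma diff_fderiv_apply (f : ℂ → ℝ) (hf : ContDiff ℝ 2 f) (w : ℂ) :
    Differentiable ℝ (fun y => fderiv ℝ f y w) :=
  ((hf.fderiv_right (le_refl 2)).clm_apply contDiff_const).differentiable one_ne_zero

lemma d2_even_neg (f : ℂ → ℝ) (hf : Differentiable ℝ f)
    (he : ∀ ξ : ℂ, f ((starRingEnd ℂ) ξ) = f ξ) (x : ℂ) :
    fderiv ℝ f ((starRingEnd ℂ) x) Complex.I = - fderiv ℝ f x Complex.I := by
  have := fderiv_even f hf he x Complex.I
  simp only [Complex.conj_I] at this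
  rw [this, map_neg, neg_neg]

lemma lap_even (f : ℂ → ℝ) (hf : ContDiff ℝ 2 f)
    (he : ∀ ξ : ℂ, f ((starRingEnd ℂ) ξ) = f ξ) (x : ℂ) :
    lap f ((starRingEnd ℂ) x) = lap f x := by
  have hd : Differentiable ℝ f := hf.differentiable two_ne_zero
  have h1 : ∀ ξ : ℂ, (fun y => fderiv ℝ f y 1) ((starRingEnd ℂ) ξ)
      = (fun y => fderiv ℝ f y 1) ξ := by
    intro ξ
    have := fderiv_even f hd he ξ 1
    simpa using this.symm
  have h2 : ∀ ξ : ℂ, (fun y => fderiv ℝ f y Complex.I) ((starRingEnd ℂ) ξ)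
      = - (fun y => fderiv ℝ f y Complex.I) ξ := fun ξ => d2_even_neg f hd he ξ
  have e1 := fderiv_even _ (diff_fderiv_apply f hf 1) h1 x 1
  have e2 := fderiv_odd _ (diff_fderiv_apply f hf Complex.I) h2 x Complex.I
  simp only [map_one, Complex.conj_I, map_neg] at e1 e2
  unfold lap
  rw [← e1]
  rw [show fderiv ℝ (fun y => fderiv ℝ f y Complex.I) ((starRingEnd ℂ) x) Complex.I
    = fderiv ℝ (fun y => fderiv ℝ f y Complex.I) x Complex.I by rw [e2]; ring]

lemma omega_pow_N (N : ℕ) (hN : 2 ≤ N) :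
    (Complex.exp (2 * π * Complex.I / N)) ^ N = 1 := by
  rw [← Complex.exp_nat_mul]
  have hN0 : (N : ℂ) ≠ 0 := Nat.cast_ne_zero.mpr (by omega)
  rw [mul_div_cancel₀ _ hN0]
  simpa [mul_comm] using Complex.exp_two_pi_mul_I

lemma conj_omega_pow (N : ℕ) (hN : 2 ≤ N) (l : ℕ) (hl : l ∈ Finset.Ico 1 N) :
    (starRingEnd ℂ) ((Complex.exp (2 * π * Complex.I / N)) ^ l)
      = (Complex.exp (2 * π * Complex.I / N)) ^ (N - l) := by
  have hl' := Finset.mem_Ico.mp hl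
  have key : (Complex.exp (2 * π * Complex.I / N)) ^ (N - l)
      * (Complex.exp (2 * π * Complex.I / N)) ^ l = 1 := by
    rw [← pow_add, Nat.sub_add_cancel (le_of_lt hl'.2), omega_pow_N N hN]
  have hc : (starRingEnd ℂ) (Complex.exp (2 * π * Complex.I / N))
      = (Complex.exp (2 * π * Complex.I / N))⁻¹ := by
    rw [← Complex.exp_conj, ← Complex.exp_neg]
    congr 1
    rw [map_div₀, map_mul, map_mul, Complex.conj_I, Complex.conj_ofReal, map_natCast,
      map_ofNat]
    ring
  rw [map_pow, hc, inv_pow]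
  exact (eq_inv_of_mul_eq_one_left key).symm

lemma Qop_even (N : ℕ) (hN : 2 ≤ N) (a : ℝ) (f : ℂ → ℝ)
    (he : ∀ ξ : ℂ, f ((starRingEnd ℂ) ξ) = f ξ) (ξ : ℂ) :
    Qop N (a : ℂ) f ((starRingEnd ℂ) ξ) = Qop N (a : ℂ) f ξ := by
  unfold Qop
  refine Finset.sum_nbij' (fun l => N - l) (fun l => N - l) ?_ ?_ ?_ ?_ ?_
  · intro l hl; simp only [Finset.mem_Ico] at hl ⊢; omega
  · intro l hl; simp only [Finset.mem_Ico] at hl ⊢; omega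
  · intro l hl; simp only [Finset.mem_Ico] at hl; omega
  · intro l hl; simp only [Finset.mem_Ico] at hl; omega
  · intro l hl
    rw [← he ((Complex.exp (2 * π * Complex.I / N)) ^ (N - l) * ξ +
        ((Complex.exp (2 * π * Complex.I / N)) ^ (N - l) - 1) * (a : ℂ))]
    congr 1
    have hmem : N - l ∈ Finset.Ico 1 N := by
      have := Finset.mem_Ico.mp hl; exact Finset.mem_Ico.mpr ⟨by omega, by omega⟩
    have h2 : N - (N - l) = l := by have := Finset.mem_Ico.mp hl; omega
    rw [map_add, map_mul, map_mul, map_sub, map_one, conj_omega_pow N hN _ hmem, h2,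
      Complex.conj_ofReal]

/-- For `b = (a, 0)` and streamfunctions `φ, φ̂` of class `C²` that are even in the second
variable (invariant under conjugation), the real part of the velocity functional vanishes:
`∫ ∂₂(Q̃_b φ + γ T_b φ̂) Δφ = 0`. -/
theorem real_part_of_velocity_functional_vanishes
    (N : ℕ) (hN : 2 ≤ N) (a γ : ℝ) (φ φh : ℂ → ℝ)
    (hφ : ContDiff ℝ 2 φ) (hφh : ContDiff ℝ 2 φh)
    (heφ : ∀ ξ : ℂ, φ ((starRingEnd ℂ) ξ) = φ ξ)
    (heφh : ∀ ξ : ℂ, φh ((starRingEnd ℂ) ξ) = φh ξ)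
    (hint : Integrable (fun ξ : ℂ =>
      d2 (fun η => Qop N (a : ℂ) φ η + γ * φh (η + (a : ℂ))) ξ * lap φ ξ)) :
    ∫ ξ : ℂ, d2 (fun η => Qop N (a : ℂ) φ η + γ * φh (η + (a : ℂ))) ξ * lap φ ξ = 0 := by
  set g : ℂ → ℝ := fun η => Qop N (a : ℂ) φ η + γ * φh (η + (a : ℂ)) with hg
  set F : ℂ → ℝ := fun ξ => d2 g ξ * lap φ ξ with hF
  have hφd : Differentiable ℝ φ := hφ.differentiable two_ne_zero
  have hgd : Differentiable ℝ g := by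
    have h1 : Differentiable ℝ (fun η => Qop N (a : ℂ) φ η) := by
      unfold Qop
      apply Differentiable.fun_sum
      intro l _
      exact hφd.comp ((differentiable_id.const_mul _).add_const _)
    exact h1.add (Differentiable.const_mul
      ((hφh.differentiable two_ne_zero).comp (differentiable_id.add_const _)) γ)
  have hge : ∀ ξ : ℂ, g ((starRingEnd ℂ) ξ) = g ξ := by
    intro ξ
    have h1 := Qop_even N hN a φ heφ ξ
    have h2 : φh ((starRingEnd ℂ) ξ + (a : ℂ)) = φh (ξ + (a : ℂ)) := by
      rw [show (starRingEnd ℂ) ξ + (a : ℂ) = (starRingEnd ℂ) (ξ + (a : ℂ)) by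
        rw [map_add, Complex.conj_ofReal], heφh]
    simp only [hg, h1, h2]
  have hodd : ∀ ξ : ℂ, F ((starRingEnd ℂ) ξ) = - F ξ := by
    intro ξ
    have h1 : d2 g ((starRingEnd ℂ) ξ) = - d2 g ξ := d2_even_neg g hgd hge ξ
    have h2 := lap_even φ hφ heφ ξ
    simp only [hF, h1, h2, neg_mul]
  have hmp : MeasurePreserving (⇑Complex.conjLIE) volume volume :=
    Complex.conjLIE.measurePreserving
  have hcomp : ∫ ξ : ℂ, F (Complex.conjLIE ξ) = ∫ ξ : ℂ, F ξ :=
    hmp.integral_comp Complex.conjLIE.toHomeomorph.measurableEmbedding F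
  have heq : ∫ ξ : ℂ, F (Complex.conjLIE ξ) = - ∫ ξ : ℂ, F ξ := by
    rw [show (fun ξ : ℂ => F (Complex.conjLIE ξ)) = fun ξ => - F ξ from
      funext fun ξ => hodd ξ, integral_neg]
  have : ∫ ξ : ℂ, F ξ = 0 := by
    have := hcomp.symm.trans heq
    linarith
  exact this
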